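/- Let μ* be the SOSM of (N, M, u) and μ*_i the SOSM of the market with student i removed. Define N_{j,1} = μ*⁻¹(j, u) \ μ*_i⁻¹(j, u_{-i}) and N_{j,0} = μ*_i⁻¹(j, u_{-i}) \ μ*⁻¹(j, u). Then for any college j that is at full capacity under μ*_i (i.e., |μ*_i⁻¹(j, u_{-i})| = q_j), we have |N_{j,1}| = |N_{j,0}|. -/

import Mathlib

attribute [local instance] Classical.propDecidable

noncomputable section

/-- A many-to-one college admissions market (college admissions model) with `n`
students and `m` colleges.  Strict preferences are encoded by injective rank
functions (a smaller rank means more preferred); `none` is the outside option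
`0` (being unmatched / an unfilled position). -/
structure Market (n m : ℕ) where
  quota : Fin m → ℕ
  sRank : Fin n → Option (Fin m) → ℕ
  sRank_inj : ∀ i, Function.Injective (sRank i)
  cRank : Fin m → Option (Fin n) → ℕ
  cRank_inj : ∀ j, Function.Injective (cRank j)

namespace Market

variable {n m : ℕ}

/-- Student `i` strictly prefers `a` to `b`. -/
def sPref (M : Market n m) (i : Fin n) (a b : Option (Fin m)) : Prop :=
  M.sRank i a < M.sRank i b

/-- College `j` strictly prefers `a` to `b`. -/
def cPref (M : Market n m) (j : Fin m) (a b : Option (Fin n)) : Prop :=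
  M.cRank j a < M.cRank j b

/-- The set `μ⁻¹(j)` of students matched to college `j` under `μ`. -/
def assigned (M : Market n m) (μ : Fin n → Option (Fin m)) (j : Fin m) : Finset (Fin n) :=
  Finset.univ.filter fun i => μ i = some j

/-- `μ` is a (capacity-feasible) matching: `|μ⁻¹(j)| ≤ q_j` for every college. -/
def IsMatching (M : Market n m) (μ : Fin n → Option (Fin m)) : Prop :=
  ∀ j, (M.assigned μ j).card ≤ M.quota j

/-- Individual rationality of `μ`. -/
def IndRational (M : Market n m) (μ : Fin n → Option (Fin m)) : Prop :=
  (∀ i, ¬ M.sPref i none (μ i)) ∧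
  (∀ j i', μ i' = some j → ¬ M.cPref j none (some i'))

/-- `(i, j)` is a blocking pair for `μ`. -/
def Blocks (M : Market n m) (μ : Fin n → Option (Fin m)) (i : Fin n) (j : Fin m) : Prop :=
  M.sPref i (some j) (μ i) ∧
  (((M.assigned μ j).card < M.quota j ∧ M.cPref j (some i) none) ∨
   ((M.assigned μ j).card = M.quota j ∧ ∃ i' ∈ M.assigned μ j, M.cPref j (some i) (some i')))

/-- `μ` is stable: individually rational with no blocking pair. -/
def Stable (M : Market n m) (μ : Fin n → Option (Fin m)) : Prop :=
  M.IndRational μ ∧ ∀ i j, ¬ M.Blocks μ i j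

/-- `μ` is envy-free: individually rational and any blocking pair involves an
unmatched student. -/
def EnvyFree (M : Market n m) (μ : Fin n → Option (Fin m)) : Prop :=
  M.IndRational μ ∧ ∀ i j, M.Blocks μ i j → μ i = none

/-- `μ` is 1-envy-free: envy-free, and either stable or there is one and only
one student who belongs to every blocking pair. -/
def OneEnvyFree (M : Market n m) (μ : Fin n → Option (Fin m)) : Prop :=
  M.EnvyFree μ ∧ (M.Stable μ ∨ ∃! i : Fin n, ∀ i' j, M.Blocks μ i' j → i' = i)

/-- `(i, j)` is a student-maximal blocking pair: `j` is `i`'s most preferred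
college among those with whom `i` forms a blocking pair. -/
def StudentMaxBlock (M : Market n m) (μ : Fin n → Option (Fin m)) (i : Fin n) (j : Fin m) :
    Prop :=
  M.Blocks μ i j ∧ ∀ j', M.Blocks μ i j' → M.sRank i (some j) ≤ M.sRank i (some j')

/-- `T` is the re-stabilization operator: on a 1-envy-free matching with no
blocking pair it is the identity; otherwise it satisfies the unique
student-maximal blocking pair `(i, j)`, matching `i` to `j`, keeping everyone
not matched to `j` unchanged, keeping the students of `j` if `j` has a vacancy
or if they are not `j`'s worst current student, and unmatching `j`'s worst
current student otherwise. -/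
def IsTStep (M : Market n m) (T : (Fin n → Option (Fin m)) → Fin n → Option (Fin m)) : Prop :=
  ∀ μ, M.IsMatching μ → M.OneEnvyFree μ →
    ((∀ i j, ¬ M.Blocks μ i j) → T μ = μ) ∧
    ∀ i j, M.StudentMaxBlock μ i j →
      T μ i = some j ∧
      ∀ i', i' ≠ i →
        (μ i' ≠ some j → T μ i' = μ i') ∧
        (μ i' = some j →
          ((M.assigned μ j).card < M.quota j → T μ i' = μ i') ∧
          ((M.assigned μ j).card = M.quota j →
            ((∃ i'' ∈ M.assigned μ j, M.cPref j (some i') (some i'')) → T μ i' = μ i') ∧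
            ((∀ i'' ∈ M.assigned μ j, i'' ≠ i' → M.cPref j (some i'') (some i')) →
              T μ i' = none)))

/-- `Tstar` iterates `T` finitely many times from any 1-envy-free matching
until a fixed point of `T` is reached. -/
def IsTStarOf (M : Market n m) (T Tstar : (Fin n → Option (Fin m)) → Fin n → Option (Fin m)) :
    Prop :=
  ∀ μ, M.IsMatching μ → M.OneEnvyFree μ →
    ∃ r : ℕ, Tstar μ = T^[r] μ ∧ T (Tstar μ) = Tstar μ

/-- A one-step responsive improvement for college `j`: `A` is obtained from `B`
either by filling a vacancy with an acceptable student, or by swapping a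
student of `B` for a strictly preferred outside student. -/
def SwapImproves (M : Market n m) (j : Fin m) (A B : Finset (Fin n)) : Prop :=
  (∃ i₁, i₁ ∉ B ∧ A = insert i₁ B ∧ M.cPref j (some i₁) none) ∨
  (∃ i₁ i₂, i₂ ∈ B ∧ i₁ ∉ B ∧ A = insert i₁ (B.erase i₂) ∧ M.cPref j (some i₁) (some i₂))

/-- The responsive extension of college `j`'s strict preference to sets of
students: the transitive closure of one-step responsive improvements. -/
def SetPref (M : Market n m) (j : Fin m) (A B : Finset (Fin n)) : Prop :=
  Relation.TransGen (M.SwapImproves j) A B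

/-- `μ₁ ≿ μ₂`: every college either gets the same set of students or a
strictly (responsively) preferred set. -/
def CollegesWeakPref (M : Market n m) (μ₁ μ₂ : Fin n → Option (Fin m)) : Prop :=
  ∀ j, M.assigned μ₁ j = M.assigned μ₂ j ∨ M.SetPref j (M.assigned μ₁ j) (M.assigned μ₂ j)

/-- `μ` is the student-optimal stable matching: a stable matching that every
student weakly prefers to any other stable matching. -/
def IsSOSM (M : Market n m) (μ : Fin n → Option (Fin m)) : Prop :=
  M.IsMatching μ ∧ M.Stable μ ∧
    ∀ μ', M.IsMatching μ' → M.Stable μ' → ∀ i, M.sRank i (μ i) ≤ M.sRank i (μ' i)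

/-- `μ` (with student `i` unmatched) is a stable matching of the market in
which student `i` has been removed. -/
def StableAway (M : Market n m) (i : Fin n) (μ : Fin n → Option (Fin m)) : Prop :=
  μ i = none ∧
  (∀ i', i' ≠ i → ¬ M.sPref i' none (μ i')) ∧
  (∀ j i', i' ≠ i → μ i' = some j → ¬ M.cPref j none (some i')) ∧
  (∀ i' j, i' ≠ i → ¬ M.Blocks μ i' j)

/-- `μ` (with student `i` unmatched) is the student-optimal stable matching of
the market in which student `i` has been removed. -/
def IsSOSMAway (M : Market n m) (i : Fin n) (μ : Fin n → Option (Fin m)) : Prop :=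
  M.IsMatching μ ∧ M.StableAway i μ ∧
    ∀ μ', M.IsMatching μ' → M.StableAway i μ' →
      ∀ i', i' ≠ i → M.sRank i' (μ i') ≤ M.sRank i' (μ' i')

/-- The maximum rank difference `h(w)` among the colleges' preferences: the
largest rank gap `|w_j(i₁) − w_j(i₂)|` over colleges `j` and pairs `(i₁, i₂)`
on whose relative ranking at least two colleges disagree (`0` if there is no
disagreement). -/
def maxRankDiff (M : Market n m) : ℕ :=
  Finset.univ.sup fun j : Fin m =>
    (Finset.univ.filter fun q : Option (Fin n) × Option (Fin n) =>
        ∃ j₁ j₂ : Fin m, M.cPref j₁ q.1 q.2 ∧ M.cPref j₂ q.2 q.1).sup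
      fun q => ((M.cRank j q.1 : ℤ) - (M.cRank j q.2 : ℤ)).natAbs

/-- `N*_{j,1}(μ) = μ⁻¹(j) \ μ*⁻¹(j)` : students of `j` under `μ` but not `μs`. -/
def Nset1 (M : Market n m) (μ μs : Fin n → Option (Fin m)) (j : Fin m) : Finset (Fin n) :=
  M.assigned μ j \ M.assigned μs j

/-- `N*_{j,0}(μ) = μ*⁻¹(j) \ μ⁻¹(j)` : students of `j` under `μs` but not `μ`. -/
def Nset0 (M : Market n m) (μ μs : Fin n → Option (Fin m)) (j : Fin m) : Finset (Fin n) :=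
  M.assigned μs j \ M.assigned μ j

/-- The rank `r_{j,i}(A)` of student `i` within the set `A` according to `≻_j`. -/
def rankIn (M : Market n m) (j : Fin m) (i : Fin n) (A : Finset (Fin n)) : ℕ :=
  (A.filter fun i' => M.cPref j (some i') (some i)).card + 1

/-- `a ▷_j b`: student `a` displaces student `b` from college `j` (as we move
from the SOSM `μs` to the stable matching `μ`). -/
def Displaces (M : Market n m) (μ μs : Fin n → Option (Fin m)) (j : Fin m) (a b : Fin n) :
    Prop :=
  a ∈ M.Nset1 μ μs j ∧ b ∈ M.Nset0 μ μs j ∧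
    M.rankIn j a (M.Nset1 μ μs j) = M.rankIn j b (M.Nset0 μ μs j)

/-- `a ▷ b`: `a` displaces `b` from some college. -/
def DisplacesAny (M : Market n m) (μ μs : Fin n → Option (Fin m)) (a b : Fin n) : Prop :=
  ∃ j, M.Displaces μ μs j a b

/-- The positions of the related one-to-one market: college `j` is split into
`q_j` ordered positions. -/
abbrev Position (M : Market n m) : Type := (j : Fin m) × Fin (M.quota j)

/-- Student `i`'s strict preference over positions in the related one-to-one
market: positions of strictly better colleges are better, and within a college
a smaller index is better. -/
def PosBetter (M : Market n m) (i : Fin n) :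
    Option (Position M) → Option (Position M) → Prop
  | some q, some q' =>
      M.sRank i (some q.1) < M.sRank i (some q'.1) ∨ (q.1 = q'.1 ∧ (q.2 : ℕ) < (q'.2 : ℕ))
  | some q, none => M.sRank i (some q.1) < M.sRank i none
  | none, some q' => M.sRank i none < M.sRank i (some q'.1)
  | none, none => False

/-- `(μN, μM)` is the one-to-one matching of the related market corresponding
to the many-to-one matching `μ`: the students of `μ⁻¹(j)` occupy, in the order
of college `j`'s preference, the ordered positions of `j`. -/
def Corresponds (M : Market n m) (μ : Fin n → Option (Fin m))
    (μN : Fin n → Option (Position M)) (μM : Position M → Option (Fin n)) : Prop :=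
  (∀ i p, μN i = some p ↔ μM p = some i) ∧
  (∀ i j, (∃ s, μN i = some ⟨j, s⟩) ↔ μ i = some j) ∧
  (∀ i j (s : Fin (M.quota j)), μN i = some ⟨j, s⟩ →
    (s : ℕ) = ((M.assigned μ j).filter fun i' => M.cPref j (some i') (some i)).card)

/-- `(i, p)` is a blocking pair in the related one-to-one market. -/
def PosBlocks (M : Market n m) (μN : Fin n → Option (Position M))
    (μM : Position M → Option (Fin n)) (i : Fin n) (p : Position M) : Prop :=
  M.PosBetter i (some p) (μN i) ∧ M.cPref p.1 (some i) (μM p)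

/-- Individual rationality in the related one-to-one market. -/
def PosIR (M : Market n m) (μN : Fin n → Option (Position M))
    (μM : Position M → Option (Fin n)) : Prop :=
  (∀ i, ¬ M.PosBetter i none (μN i)) ∧ (∀ p : Position M, ¬ M.cPref p.1 none (μM p))

/-- Stability in the related one-to-one market. -/
def PosStable (M : Market n m) (μN : Fin n → Option (Position M))
    (μM : Position M → Option (Fin n)) : Prop :=
  M.PosIR μN μM ∧ ∀ i p, ¬ M.PosBlocks μN μM i p

/-- Simplicity in the related one-to-one market: individually rational and any
blocking pair involves an unmatched student. -/
def PosSimple (M : Market n m) (μN : Fin n → Option (Position M))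
    (μM : Position M → Option (Fin n)) : Prop :=
  M.PosIR μN μM ∧ ∀ i p, M.PosBlocks μN μM i p → μN i = none

/-- 1-simplicity in the related one-to-one market: simple, and either stable or
there is one and only one student belonging to every blocking pair. -/
def PosOneSimple (M : Market n m) (μN : Fin n → Option (Position M))
    (μM : Position M → Option (Fin n)) : Prop :=
  M.PosSimple μN μM ∧
    (M.PosStable μN μM ∨ ∃! i : Fin n, ∀ i' p, M.PosBlocks μN μM i' p → i' = i)

end Market

/-- A generic one-to-one matching market with `n` students and `p` positions,
with strict preferences encoded by injective rank functions. -/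
structure OOMarket (n p : ℕ) where
  sRank : Fin n → Option (Fin p) → ℕ
  sRank_inj : ∀ i, Function.Injective (sRank i)
  pRank : Fin p → Option (Fin n) → ℕ
  pRank_inj : ∀ c, Function.Injective (pRank c)

namespace OOMarket

variable {n p : ℕ}

/-- `(μN, μM)` is a one-to-one matching. -/
def IsOOMatching (O : OOMarket n p) (μN : Fin n → Option (Fin p))
    (μM : Fin p → Option (Fin n)) : Prop :=
  ∀ i c, μN i = some c ↔ μM c = some i

/-- `(i, c)` is a blocking pair for `(μN, μM)`. -/
def OOBlocks (O : OOMarket n p) (μN : Fin n → Option (Fin p))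
    (μM : Fin p → Option (Fin n)) (i : Fin n) (c : Fin p) : Prop :=
  O.sRank i (some c) < O.sRank i (μN i) ∧ O.pRank c (some i) < O.pRank c (μM c)

/-- Individual rationality. -/
def OOIR (O : OOMarket n p) (μN : Fin n → Option (Fin p))
    (μM : Fin p → Option (Fin n)) : Prop :=
  (∀ i, ¬ O.sRank i none < O.sRank i (μN i)) ∧ (∀ c, ¬ O.pRank c none < O.pRank c (μM c))

/-- Stability. -/
def OOStable (O : OOMarket n p) (μN : Fin n → Option (Fin p))
    (μM : Fin p → Option (Fin n)) : Prop :=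
  O.OOIR μN μM ∧ ∀ i c, ¬ O.OOBlocks μN μM i c

/-- Simplicity: individually rational and every blocking pair involves an
unmatched student. -/
def OOSimple (O : OOMarket n p) (μN : Fin n → Option (Fin p))
    (μM : Fin p → Option (Fin n)) : Prop :=
  O.OOIR μN μM ∧ ∀ i c, O.OOBlocks μN μM i c → μN i = none

/-- 1-simplicity: simple, and either stable or there is one and only one
student belonging to every blocking pair. -/
def OOOneSimple (O : OOMarket n p) (μN : Fin n → Option (Fin p))
    (μM : Fin p → Option (Fin n)) : Prop :=
  O.OOSimple μN μM ∧
    (O.OOStable μN μM ∨ ∃! i : Fin n, ∀ i' c, O.OOBlocks μN μM i' c → i' = i)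

end OOMarket

end

/-- for a college `j` at full capacity under the SOSM `μ*_i` of
the market without student `i`, the in-flow and out-flow of students at `j`
between `μ*` and `μ*_i` are equinumerous. -/
private lemma sum_term_eq {m : ℕ} {F : Finset (Fin m)} {f g : Fin m → ℕ}
    (hle : ∀ j' ∈ F, f j' ≤ g j') (heq : ∑ j' ∈ F, f j' = ∑ j' ∈ F, g j') :
    ∀ j' ∈ F, f j' = g j' := by
  intro j' hj'
  by_contra hne
  have hlt : f j' < g j' := lt_of_le_of_ne (hle j' hj') hne
  exact absurd heq (ne_of_lt (Finset.sum_lt_sum hle ⟨j', hj', hlt⟩))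

theorem full_college_inflow_eq_outflow {n m : ℕ} (M : Market n m)
    (i : Fin n) (μs μi : Fin n → Option (Fin m))
    (hs : M.IsSOSM μs) (hi : M.IsSOSMAway i μi)
    (j : Fin m) (hfull : (M.assigned μi j).card = M.quota j) :
    (M.assigned μs j \ M.assigned μi j).card =
      (M.assigned μi j \ M.assigned μs j).card := by
  classical
  obtain ⟨hsM, ⟨⟨sIRs, sIRc⟩, sNB⟩, hsOpt⟩ := hs
  obtain ⟨hiM, ⟨hiNone, hiIRs, hiIRc, hiNB⟩, hiOpt⟩ := hi
  have hmem : ∀ (μ : Fin n → Option (Fin m)) (j' : Fin m) (i' : Fin n),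
      i' ∈ M.assigned μ j' ↔ μ i' = some j' := by
    intro μ j' i'; simp [Market.assigned]
  have cacc : ∀ (j' : Fin m) (i' : Fin n),
      ¬ M.cPref j' none (some i') → M.cPref j' (some i') none := by
    intro j' i' h
    refine lt_of_le_of_ne (not_lt.mp h) fun hEq => ?_
    exact Option.some_ne_none i' (M.cRank_inj j' hEq)
  have cstrict : ∀ (j' : Fin m) (a b : Fin n), a ≠ b →
      ¬ M.cPref j' (some b) (some a) → M.cPref j' (some a) (some b) := by
    intro j' a b hab h
    refine lt_of_le_of_ne (not_lt.mp h) fun hEq => ?_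
    exact hab (Option.some_injective _ (M.cRank_inj j' hEq))
  have sne : ∀ (i' : Fin n) (a b : Option (Fin m)), a ≠ b →
      M.sRank i' a ≠ M.sRank i' b := fun i' a b hab h => hab (M.sRank_inj i' h)
  set U : Finset (Fin n) := Finset.univ.filter
      (fun i' => i' ≠ i ∧ M.sRank i' (μs i') < M.sRank i' (μi i')) with hUdef
  have hUmem : ∀ i', i' ∈ U ↔ (i' ≠ i ∧ M.sRank i' (μs i') < M.sRank i' (μi i')) := by
    intro i'; simp [hUdef]
  set F : Finset (Fin m) := Finset.univ.filter
      (fun j' => ∃ i' ∈ U, μs i' = some j') with hFdef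
  have hFmem : ∀ j', j' ∈ F ↔ ∃ i' ∈ U, μs i' = some j' := by
    intro j'; simp [hFdef]
  -- every member of U is matched by μs to a college full under μi whose
  -- μi-students are all preferred to it
  have hUspec : ∀ i' ∈ U, ∃ c', μs i' = some c' ∧
      (M.assigned μi c').card = M.quota c' ∧
      (∀ i'' ∈ M.assigned μi c', M.cPref c' (some i'') (some i')) := by
    intro i' hi'
    obtain ⟨hne, hlt⟩ := (hUmem i').mp hi'
    obtain ⟨c', hc'⟩ : ∃ c', μs i' = some c' := by
      cases hμ : μs i' with
      | none => exact absurd (hμ ▸ hlt) (hiIRs i' hne)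
      | some c' => exact ⟨c', rfl⟩
    have hpref : M.sPref i' (some c') (μi i') := by rw [hc'] at hlt; exact hlt
    have hacc : M.cPref c' (some i') none := cacc c' i' (sIRc c' i' hc')
    have hnotor : ¬ (((M.assigned μi c').card < M.quota c' ∧ M.cPref c' (some i') none) ∨
        ((M.assigned μi c').card = M.quota c' ∧
          ∃ i₃ ∈ M.assigned μi c', M.cPref c' (some i') (some i₃))) :=
      fun hor => hiNB i' c' hne ⟨hpref, hor⟩
    have hfullc : (M.assigned μi c').card = M.quota c' :=
      le_antisymm (hiM c') (not_lt.mp fun h => hnotor (Or.inl ⟨h, hacc⟩))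
    refine ⟨c', hc', hfullc, ?_⟩
    intro i₃ hi₃
    have hne₃ : i₃ ≠ i' := by
      intro h; subst h
      rw [hmem] at hi₃
      rw [hi₃] at hpref
      exact lt_irrefl _ hpref
    exact cstrict c' i₃ i' hne₃ fun hp => hnotor (Or.inr ⟨hfullc, i₃, hi₃, hp⟩)
  -- a μi-student of a college in F that is not its μs-student belongs to U
  have hQU : ∀ j' ∈ F, ∀ i'' : Fin n, μi i'' = some j' → μs i'' ≠ some j' → i'' ∈ U := by
    intro j' hj' i'' hB hA
    obtain ⟨i', hi'U, hi's⟩ := (hFmem j').mp hj'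
    obtain ⟨c', hc', hfullc, hall⟩ := hUspec i' hi'U
    have hcj : c' = j' := Option.some_injective _ (hc'.symm.trans hi's)
    subst hcj
    have hne'' : i'' ≠ i := fun h => by rw [h, hiNone] at hB; exact Option.some_ne_none _ hB.symm
    rw [hUmem]
    refine ⟨hne'', ?_⟩
    by_contra hge
    have hle : M.sRank i'' (μi i'') ≤ M.sRank i'' (μs i'') := not_lt.mp hge
    rw [hB] at hle
    have hlt2 : M.sRank i'' (some c') < M.sRank i'' (μs i'') :=
      lt_of_le_of_ne hle (sne i'' _ _ fun h => hA h.symm)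
    have haccB : M.cPref c' (some i'') none := cacc c' i'' (hiIRc c' i'' hne'' hB)
    refine sNB i'' c' ⟨hlt2, ?_⟩
    rcases lt_or_eq_of_le (hsM c') with h3 | h3
    · exact Or.inl ⟨h3, haccB⟩
    · exact Or.inr ⟨h3, i', (hmem _ _ _).mpr hi's, hall i'' ((hmem _ _ _).mpr hB)⟩
  -- counting
  have hUsubP : ∀ j', U ∩ M.assigned μs j' ⊆ M.assigned μs j' \ M.assigned μi j' := by
    intro j' i' hi'
    rw [Finset.mem_inter] at hi'
    obtain ⟨hiU, hiA⟩ := hi'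
    rw [Finset.mem_sdiff]
    refine ⟨hiA, ?_⟩
    rw [hmem] at hiA ⊢
    intro hiB
    have hlt := ((hUmem i').mp hiU).2
    rw [hiA, hiB] at hlt
    exact lt_irrefl _ hlt
  have hDAs : ∀ j₁ ∈ F, ∀ j₂ ∈ F, j₁ ≠ j₂ →
      Disjoint (U ∩ M.assigned μs j₁) (U ∩ M.assigned μs j₂) := by
    intro j₁ _ j₂ _ h12
    rw [Finset.disjoint_left]
    intro a ha hb
    rw [Finset.mem_inter, hmem] at ha hb
    exact h12 (Option.some_injective _ (ha.2.symm.trans hb.2))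
  have hDQ : ∀ j₁ ∈ F, ∀ j₂ ∈ F, j₁ ≠ j₂ →
      Disjoint (M.assigned μi j₁ \ M.assigned μs j₁)
        (M.assigned μi j₂ \ M.assigned μs j₂) := by
    intro j₁ _ j₂ _ h12
    rw [Finset.disjoint_left]
    intro a ha hb
    rw [Finset.mem_sdiff, hmem] at ha hb
    exact h12 (Option.some_injective _ (ha.1.symm.trans hb.1))
  have hUcover : U = F.biUnion (fun j' => U ∩ M.assigned μs j') := by
    ext i'
    simp only [Finset.mem_biUnion, Finset.mem_inter]
    constructor
    · intro hi'
      obtain ⟨c', hc', -, -⟩ := hUspec i' hi'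
      exact ⟨c', (hFmem c').mpr ⟨i', hi', hc'⟩, hi', (hmem _ _ _).mpr hc'⟩
    · rintro ⟨_, -, h, -⟩
      exact h
  have hQsubU : ∀ j' ∈ F, M.assigned μi j' \ M.assigned μs j' ⊆ U := by
    intro j' hj' i'' hi''
    rw [Finset.mem_sdiff, hmem, hmem] at hi''
    exact hQU j' hj' i'' hi''.1 hi''.2
  have hs1 : U.card = ∑ j' ∈ F, (U ∩ M.assigned μs j').card := by
    conv_lhs => rw [hUcover]
    exact Finset.card_biUnion hDAs
  have hs3le : ∑ j' ∈ F, (M.assigned μi j' \ M.assigned μs j').card ≤ U.card := by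
    rw [← Finset.card_biUnion hDQ]
    apply Finset.card_le_card
    intro a ha
    rw [Finset.mem_biUnion] at ha
    obtain ⟨j', hj', ha⟩ := ha
    exact hQsubU j' hj' ha
  have hUAle : ∀ j' ∈ F, (U ∩ M.assigned μs j').card ≤
      (M.assigned μs j' \ M.assigned μi j').card :=
    fun j' _ => Finset.card_le_card (hUsubP j')
  have hPQle : ∀ j' ∈ F, (M.assigned μs j' \ M.assigned μi j').card ≤
      (M.assigned μi j' \ M.assigned μs j').card := by
    intro j' hj'
    obtain ⟨i', hi'U, hi's⟩ := (hFmem j').mp hj'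
    obtain ⟨c', hc', hfullc, -⟩ := hUspec i' hi'U
    have hcj : c' = j' := Option.some_injective _ (hc'.symm.trans hi's)
    subst hcj
    have e1 := Finset.card_sdiff_add_card_inter (M.assigned μs c') (M.assigned μi c')
    have e2 := Finset.card_sdiff_add_card_inter (M.assigned μi c') (M.assigned μs c')
    have e3 : M.assigned μs c' ∩ M.assigned μi c'
        = M.assigned μi c' ∩ M.assigned μs c' := Finset.inter_comm _ _
    have e4 : (M.assigned μs c').card ≤ (M.assigned μi c').card := by
      rw [hfullc]; exact hsM c'
    rw [e3] at e1
    omega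
  have hchain1 : ∑ j' ∈ F, (U ∩ M.assigned μs j').card ≤
      ∑ j' ∈ F, (M.assigned μs j' \ M.assigned μi j').card := Finset.sum_le_sum hUAle
  have hchain2 : ∑ j' ∈ F, (M.assigned μs j' \ M.assigned μi j').card ≤
      ∑ j' ∈ F, (M.assigned μi j' \ M.assigned μs j').card := Finset.sum_le_sum hPQle
  have hseq1 : ∑ j' ∈ F, (U ∩ M.assigned μs j').card =
      ∑ j' ∈ F, (M.assigned μs j' \ M.assigned μi j').card := by omega
  have hseq3 : ∑ j' ∈ F, (M.assigned μi j' \ M.assigned μs j').card = U.card := by omega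
  have hPeq : ∀ j' ∈ F, (U ∩ M.assigned μs j') =
      (M.assigned μs j' \ M.assigned μi j') := by
    intro j' hj'
    refine Finset.eq_of_subset_of_card_le (hUsubP j') ?_
    exact le_of_eq (sum_term_eq hUAle hseq1 j' hj').symm
  have hQeqU : F.biUnion (fun j' => M.assigned μi j' \ M.assigned μs j') = U := by
    refine Finset.eq_of_subset_of_card_le ?_ ?_
    · intro a ha
      rw [Finset.mem_biUnion] at ha
      obtain ⟨j', hj', ha⟩ := ha
      exact hQsubU j' hj' ha
    · rw [Finset.card_biUnion hDQ]
      exact le_of_eq hseq3.symm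
  have hUtoF : ∀ i' ∈ U, ∃ j' ∈ F, μi i' = some j' := by
    intro i' hi'
    rw [← hQeqU, Finset.mem_biUnion] at hi'
    obtain ⟨j', hj', hq⟩ := hi'
    rw [Finset.mem_sdiff, hmem] at hq
    exact ⟨j', hj', hq.1⟩
  -- the swap matching
  set ν : Fin n → Option (Fin m) := fun i' => if i' ∈ U then μs i' else μi i' with hνdef
  have hνU : ∀ i' ∈ U, ν i' = μs i' := by intro i' h; simp [hνdef, h]
  have hνnU : ∀ i' ∉ U, ν i' = μi i' := by intro i' h; simp [hνdef, h]
  have hiUmem : i ∉ U := by rw [hUmem]; simp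
  have hνi : ν i = none := by rw [hνnU i hiUmem]; exact hiNone
  have hνF : ∀ j' ∈ F, M.assigned ν j' = M.assigned μs j' := by
    intro j' hj'
    ext i'
    rw [hmem, hmem]
    by_cases hU' : i' ∈ U
    · rw [hνU i' hU']
    · rw [hνnU i' hU']
      constructor
      · intro hB
        by_contra hA
        exact hU' (hQU j' hj' i' hB hA)
      · intro hA
        have hnP : i' ∉ M.assigned μs j' \ M.assigned μi j' := by
          rw [← hPeq j' hj', Finset.mem_inter]
          exact fun h => hU' h.1
        rw [Finset.mem_sdiff, hmem, hmem] at hnP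
        push_neg at hnP
        exact hnP hA
  have hνnF : ∀ j' ∉ F, M.assigned ν j' = M.assigned μi j' := by
    intro j' hj'
    ext i'
    rw [hmem, hmem]
    by_cases hU' : i' ∈ U
    · rw [hνU i' hU']
      constructor
      · intro hA
        exact absurd ((hFmem j').mpr ⟨i', hU', hA⟩) hj'
      · intro hB
        obtain ⟨j'', hj'', hB'⟩ := hUtoF i' hU'
        have hjj : j' = j'' := Option.some_injective _ (hB.symm.trans hB')
        rw [hjj] at hj'
        exact absurd hj'' hj'
    · rw [hνnU i' hU']
  have hνM : M.IsMatching ν := by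
    intro j'
    by_cases hj' : j' ∈ F
    · rw [hνF j' hj']; exact hsM j'
    · rw [hνnF j' hj']; exact hiM j'
  have hνSt : M.StableAway i ν := by
    refine ⟨hνi, ?_, ?_, ?_⟩
    · intro i' hne
      by_cases hU' : i' ∈ U
      · rw [hνU i' hU']; exact sIRs i'
      · rw [hνnU i' hU']; exact hiIRs i' hne
    · intro j' i' hne hsome
      by_cases hU' : i' ∈ U
      · rw [hνU i' hU'] at hsome; exact sIRc j' i' hsome
      · rw [hνnU i' hU'] at hsome; exact hiIRc j' i' hne hsome
    · intro i' j' hne hblk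
      obtain ⟨hsp, hcol⟩ := hblk
      by_cases hj' : j' ∈ F
      · rw [hνF j' hj'] at hcol
        refine sNB i' j' ⟨?_, hcol⟩
        by_cases hU' : i' ∈ U
        · rw [hνU i' hU'] at hsp; exact hsp
        · rw [hνnU i' hU'] at hsp
          have hle : M.sRank i' (μi i') ≤ M.sRank i' (μs i') := by
            by_contra h
            exact hU' ((hUmem i').mpr ⟨hne, not_le.mp h⟩)
          exact lt_of_lt_of_le hsp hle
      · rw [hνnF j' hj'] at hcol
        refine hiNB i' j' hne ⟨?_, hcol⟩
        by_cases hU' : i' ∈ U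
        · rw [hνU i' hU'] at hsp
          exact lt_trans hsp ((hUmem i').mp hU').2
        · rw [hνnU i' hU'] at hsp; exact hsp
  -- U is empty: all students other than i weakly prefer μi
  have hUe : ∀ i' : Fin n, i' ≠ i → M.sRank i' (μi i') ≤ M.sRank i' (μs i') := by
    intro i' hne
    by_contra h
    have hiU' : i' ∈ U := (hUmem i').mpr ⟨hne, not_le.mp h⟩
    have h1 := hiOpt ν hνM hνSt i' hne
    rw [hνU i' hiU'] at h1
    exact lt_irrefl _ (lt_of_le_of_lt h1 ((hUmem i').mp hiU').2)
  -- j is full under μs as well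
  have hAfull : (M.assigned μs j).card = M.quota j := by
    by_cases hsub : M.assigned μi j ⊆ M.assigned μs j
    · refine le_antisymm (hsM j) ?_
      calc M.quota j = (M.assigned μi j).card := hfull.symm
        _ ≤ (M.assigned μs j).card := Finset.card_le_card hsub
    · obtain ⟨i'', hi''B, hi''A⟩ := Finset.not_subset.mp hsub
      rw [hmem] at hi''B
      have hne'' : i'' ≠ i := fun h => by
        rw [h, hiNone] at hi''B; exact Option.some_ne_none _ hi''B.symm
      have hle := hUe i'' hne''
      rw [hi''B] at hle
      have hspf : M.sPref i'' (some j) (μs i'') :=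
        lt_of_le_of_ne hle (sne i'' _ _ fun h => hi''A ((hmem _ _ _).mpr h.symm))
      have hacc'' := cacc j i'' (hiIRc j i'' hne'' hi''B)
      by_contra hneq
      exact sNB i'' j ⟨hspf, Or.inl ⟨lt_of_le_of_ne (hsM j) hneq, hacc''⟩⟩
  exact Finset.card_sdiff_comm (hAfull.trans hfull.symm)
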